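/- Let G be a linearly ordered additive commutative group, ℤ ×ₗ G the lexicographic product, and u = (1, 0). For every x with 0 ≤ x ≤ u, writing D(y) = (((y + y − u) ⊔ 0) + ((y + y − u) ⊔ 0)) ⊓ u (that is, D(y) = 2(y²)), one has x ≤ D(x) if and only if D(u − x) ≤ u − x. That is, in the algebra Δ(G) ∈ V(C), x ∈ θ* if and only if ¬x ∈ θ. -/

import Mathlib

section aux

variable {G : Type*} [AddCommGroup G] [LinearOrder G] [IsOrderedAddMonoid G]

private lemma lex_le_iff (p q : ℤ ×ₗ G) :
    p ≤ q ↔ (ofLex p).1 < (ofLex q).1 ∨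
      (ofLex p).1 = (ofLex q).1 ∧ (ofLex p).2 ≤ (ofLex q).2 :=
  Prod.Lex.le_iff

private lemma fst_add (p q : ℤ ×ₗ G) : (ofLex (p + q)).1 = (ofLex p).1 + (ofLex q).1 := rfl

private lemma key1 {x u : ℤ ×ₗ G} (hu : u = toLex (1, 0))
    (hx0 : 0 ≤ x) (h2 : x + x ≤ u) (h3 : u ≤ x + x + x) : False := by
  have e0 : (ofLex x).1 ≥ 0 := by
    rcases (lex_le_iff 0 x).1 hx0 with h | h
    · exact le_of_lt h
    · exact le_of_eq h.1
  have e2 := (lex_le_iff (x + x) u).1 h2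
  have e3 := (lex_le_iff u (x + x + x)).1 h3
  simp only [fst_add, hu, ofLex_toLex] at e2 e3
  omega

private lemma key2 {x u : ℤ ×ₗ G} (hu : u = toLex (1, 0))
    (h : u ≤ x + x) (hxu : x ≤ u) : u + u ≤ x + x + x := by
  have e2 := (lex_le_iff u (x + x)).1 h
  have e3 := (lex_le_iff x u).1 hxu
  rw [lex_le_iff]
  simp only [fst_add, hu, ofLex_toLex] at e2 e3 ⊢
  left; omega

end aux

/-- In the algebra `Δ(G) = Γ(ℤ ×ₗ G, (1,0)) ∈ V(C)`, writing `D(y) = 2(y²)`,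
one has `x ∈ θ*` iff `¬x ∈ θ`. -/
theorem stmt_11 {G : Type*} [AddCommGroup G] [LinearOrder G] [IsOrderedAddMonoid G]
    (u : ℤ ×ₗ G) (hu : u = toLex (1, 0))
    (D : ℤ ×ₗ G → ℤ ×ₗ G)
    (hD : ∀ y, D y = (((y + y - u) ⊔ 0) + ((y + y - u) ⊔ 0)) ⊓ u)
    (x : ℤ ×ₗ G) (hx0 : 0 ≤ x) (hxu : x ≤ u) :
    x ≤ D x ↔ D (u - x) ≤ u - x := by
  have hu0 : (0 : ℤ ×ₗ G) ≤ u := le_trans hx0 hxu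
  have hyy : (u - x) + (u - x) - u = u - (x + x) := by abel
  rcases le_total (x + x - u) 0 with h | h
  · -- case 2x ≤ u
    have hDx : D x = 0 := by
      rw [hD, sup_eq_right.mpr h, add_zero, inf_eq_left.mpr hu0]
    have hb : (0 : ℤ ×ₗ G) ≤ u - (x + x) := sub_nonneg.mpr (sub_nonpos.mp h)
    have hDy : D (u - x) = (u - (x + x) + (u - (x + x))) ⊓ u := by
      rw [hD, hyy, sup_eq_left.mpr hb]
    rw [hDx, hDy]
    constructor
    · intro hx
      have hx0' : x = 0 := le_antisymm hx hx0
      subst hx0'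
      simp only [add_zero, sub_zero]
      exact inf_le_right
    · intro hr
      rcases inf_le_iff.mp hr with hr | hr
      · exfalso
        have h2 : x + x ≤ u := by rwa [sub_nonpos] at h
        have h3 : u ≤ x + x + x := by
          have := hr
          -- u - 2x + (u - 2x) ≤ u - x  ⇒  u ≤ 3x
          have : u ≤ x + x + x := by
            have h' := hr
            rw [← sub_nonneg] at h' ⊢
            have : u - x - (u - (x + x) + (u - (x + x))) = x + x + x - u := by abel
            rwa [this] at h'
          exact this
        exact key1 hu hx0 h2 h3
      · -- u ≤ u - x ⇒ x ≤ 0 ⇒ x = 0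
        have : x ≤ 0 := by
          rw [← sub_nonneg] at hr
          have : u - x - u = -x := by abel
          rw [this] at hr
          exact neg_nonneg.mp hr
        exact this
  · -- case u ≤ 2x
    have h2 : u ≤ x + x := by rwa [sub_nonneg] at h
    have hDy : D (u - x) = 0 := by
      rw [hD, hyy]
      have hb : u - (x + x) ≤ 0 := by rwa [sub_nonpos]
      rw [sup_eq_right.mpr hb, add_zero, inf_eq_left.mpr hu0]
    have hDx : D x = (x + x - u + (x + x - u)) ⊓ u := by
      rw [hD, sup_eq_left.mpr h]
    constructor
    · intro _
      rw [hDy, ← sub_nonneg]; rwa [sub_zero, sub_nonneg]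
    · intro _
      rw [hDx]
      refine le_inf ?_ hxu
      have h3 := key2 hu h2 hxu
      rw [← sub_nonneg] at h3 ⊢
      have : x + x - u + (x + x - u) - x = x + x + x - (u + u) := by abel
      rwa [this]
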